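/- (Coexistence for the limiting dynamical system.) Assume 1 < \varphi_1 < \varphi_2, \varphi_2 > 2\log 2 and \varphi_1 \sigma > 1. Then for every p \in (0,1)^2 with p_1 + p_2 \le 1 one has \liminf_{k\to\infty} h^k_i(p) > 0 for both i = 1 and i = 2. -/

import Mathlib

/-- `g α x` : the expected density after the epidemic stage on a percolated 3-tree. -/
noncomputable def g (α x : ℝ) : ℝ :=
  if x = 0 then 0
  else (1 - Real.sqrt (1 - 4 * (1 - α) * x * (1 - x))) ^ 3 / (8 * (1 - α) ^ 2 * x ^ 2)

/-- `ψ(x) = (1 - e^{-x})/x`, with `ψ(0) = 1`. -/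
noncomputable def psi (x : ℝ) : ℝ := if x = 0 then 1 else (1 - Real.exp (-x)) / x

/-- `Σ_p = β₁ p₁ + β₂ p₂`. -/
noncomputable def Sig (β₁ β₂ : ℝ) (p : ℝ × ℝ) : ℝ := β₁ * p.1 + β₂ * p.2

/-- Growth map, first type. -/
noncomputable def f1 (β₁ β₂ : ℝ) (p : ℝ × ℝ) : ℝ :=
  if Sig β₁ β₂ p = 0 then 0
  else (1 - Real.exp (-Sig β₁ β₂ p)) * (β₁ * p.1) / Sig β₁ β₂ p

/-- Growth map, second type. -/
noncomputable def f2 (β₁ β₂ : ℝ) (p : ℝ × ℝ) : ℝ :=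
  if Sig β₁ β₂ p = 0 then 0
  else (1 - Real.exp (-Sig β₁ β₂ p)) * (β₂ * p.2) / Sig β₁ β₂ p

/-- The two-type limiting map. -/
noncomputable def hmap (α₁ α₂ β₁ β₂ : ℝ) (p : ℝ × ℝ) : ℝ × ℝ :=
  (g α₁ (f1 β₁ β₂ p), g α₂ (f2 β₁ β₂ p))

/-- `pbar α = sup_{x ∈ [0,1]} g α x`. -/
noncomputable def pbar (α : ℝ) : ℝ := sSup (g α '' Set.Icc 0 1)

/-- The one-type map for the strong species alone: `t(x) = g_{α₂}(1 - e^{-β₂ x})`. -/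
noncomputable def tmap (α₂ β₂ : ℝ) (x : ℝ) : ℝ := g α₂ (1 - Real.exp (-(β₂ * x)))

/-- `σ = inf_{x ∈ [0,p̄₂]} liminf_n (∏_{k<n} ψ(β₂ tᵏ(x)))^{1/n}`. -/
noncomputable def sigma (α₂ β₂ : ℝ) : ℝ :=
  sInf ((fun x => Filter.liminf
      (fun n : ℕ => (∏ k ∈ Finset.range n, psi (β₂ * (tmap α₂ β₂)^[k] x)) ^ (1 / (n : ℝ)))
      Filter.atTop) '' Set.Icc 0 (pbar α₂))

open Set Filter Topology

lemma psi_zero : psi 0 = 1 := by simp [psi]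

lemma psi_le_one {x : ℝ} (hx : 0 ≤ x) : psi x ≤ 1 := by
  rcases eq_or_lt_of_le hx with h | h
  · rw [← h, psi_zero]
  · rw [psi, if_neg (ne_of_gt h), div_le_one h]
    have := Real.add_one_le_exp (-x)
    have := Real.exp_pos (-x)
    linarith

lemma exp_le_psi {x : ℝ} (hx : 0 ≤ x) : Real.exp (-x) ≤ psi x := by
  rcases eq_or_lt_of_le hx with h | h
  · rw [← h, psi_zero]; simp
  · rw [psi, if_neg (ne_of_gt h), le_div_iff₀ h]
    have h1 := Real.add_one_le_exp x
    have h2 := Real.exp_pos (-x)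
    have h3 : Real.exp (-x) * Real.exp x = 1 := by
      rw [← Real.exp_add]; simp
    nlinarith

lemma psi_pos {x : ℝ} (hx : 0 ≤ x) : 0 < psi x :=
  lt_of_lt_of_le (Real.exp_pos (-x)) (exp_le_psi hx)

lemma psi_anti {a b : ℝ} (ha : 0 ≤ a) (hab : a ≤ b) : psi b ≤ psi a := by
  rcases eq_or_lt_of_le ha with h | h
  · exact (psi_le_one (le_trans ha hab)).trans (by rw [← h, psi_zero])
  rcases eq_or_lt_of_le hab with h2 | h2
  · rw [h2]
  have hb : 0 < b := lt_trans h h2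
  rw [psi, psi, if_neg (ne_of_gt h), if_neg (ne_of_gt hb),
    div_le_div_iff₀ hb h]
  set d := b - a with hd
  have hdpos : 0 < d := by simp [hd]; linarith
  have hu : Real.exp (-b) = Real.exp (-a) * Real.exp (-d) := by
    rw [← Real.exp_add, hd]; ring_nf
  have h1 : a + 1 ≤ Real.exp a := Real.add_one_le_exp a
  have h2' : 1 - d ≤ Real.exp (-d) := by have := Real.add_one_le_exp (-d); linarith
  have h3 : Real.exp (-a) * Real.exp a = 1 := by rw [← Real.exp_add]; simp
  have h4 : Real.exp (-a) * a ≤ 1 - Real.exp (-a) := by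
    have := mul_le_mul_of_nonneg_left h1 (Real.exp_nonneg (-a))
    nlinarith
  have hb' : b = a + d := by simp [hd]
  rw [hu, hb']
  have h5 : Real.exp (-a) * a * (1 - Real.exp (-d)) ≤ Real.exp (-a) * a * d := by
    apply mul_le_mul_of_nonneg_left (by linarith) (by positivity)
  nlinarith [mul_nonneg (Real.exp_nonneg (-a)) hdpos.le, mul_le_mul_of_nonneg_right h4 hdpos.le]

lemma psi_lower {a b : ℝ} (ha : 0 ≤ a) (hb : 0 ≤ b) : psi a - b ≤ psi (a + b) := by
  rcases eq_or_lt_of_le hb with h | hbpos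
  · simp [← h]
  rcases eq_or_lt_of_le ha with h | hapos
  · rw [← h, zero_add, psi_zero, psi, if_neg (ne_of_gt hbpos)]
    have h1 : b + 1 ≤ Real.exp b := Real.add_one_le_exp b
    have h3 : (1 + b) * Real.exp (-b) ≤ 1 := by
      have h2 : Real.exp (-b) * Real.exp b = 1 := by rw [← Real.exp_add]; simp
      have := mul_le_mul_of_nonneg_left h1 (Real.exp_nonneg (-b))
      nlinarith
    have key : (1 - b) * b ≤ 1 - Real.exp (-b) := by
      nlinarith [Real.exp_nonneg (-b), hbpos.le, pow_nonneg hbpos.le 3]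
    have h4 : 1 - b ≤ (1 - Real.exp (-b)) / b := (le_div_iff₀ hbpos).2 key
    linarith
  have hab : 0 < a + b := by linarith
  rw [sub_le_iff_le_add, psi, psi, if_neg (ne_of_gt hapos), if_neg (ne_of_gt hab),
    div_le_iff₀ hapos]
  set u := Real.exp (-a) with hu'
  set w := Real.exp (-b) with hw'
  have huw : Real.exp (-(a + b)) = u * w := by rw [← Real.exp_add]; ring_nf
  rw [huw]
  have expand : ((1 - u * w) / (a + b) + b) * a = ((1 - u*w)*a + b*a*(a+b))/(a+b) := by
    field_simp
  rw [expand, le_div_iff₀ hab]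
  have h1 : 1 - u ≤ a := by
    have := Real.add_one_le_exp (-a); rw [← hu'] at this; linarith
  have h2 : b * w ≤ 1 - w := by
    have h1' : b + 1 ≤ Real.exp b := Real.add_one_le_exp b
    have h2' : w * Real.exp b = 1 := by rw [← Real.exp_add]; simp [hw']
    nlinarith [Real.exp_nonneg (-b)]
  have h3 : 1 - u * w ≤ a + b := by
    have := Real.add_one_le_exp (-(a+b)); rw [huw] at this; linarith
  have hu0 : 0 ≤ u := Real.exp_nonneg _
  have hw0 : 0 ≤ w := Real.exp_nonneg _
  have f1 : (1 - u) * b ≤ a * b := mul_le_mul_of_nonneg_right h1 hb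
  have f2 : a * u * (b * w) ≤ a * u * (1 - w) :=
    mul_le_mul_of_nonneg_left h2 (by positivity)
  have f3 : a * b * (1 - u * w) ≤ a * b * (a + b) :=
    mul_le_mul_of_nonneg_left h3 (by positivity)
  nlinarith [f1, f2, f3]

lemma psi_lipschitz {u v : ℝ} (hu : 0 ≤ u) (hv : 0 ≤ v) : |psi u - psi v| ≤ |u - v| := by
  rcases le_total u v with h | h
  · have h1 : psi v ≤ psi u := psi_anti hu h
    have h2 : psi u - (v - u) ≤ psi v := by
      have := psi_lower hu (sub_nonneg.2 h); rwa [add_sub_cancel] at this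
    rw [abs_of_nonneg (sub_nonneg.2 h1), abs_of_nonpos (sub_nonpos.2 h)]
    linarith
  · have h1 : psi u ≤ psi v := psi_anti hv h
    have h2 : psi v - (u - v) ≤ psi u := by
      have := psi_lower hv (sub_nonneg.2 h); rwa [add_sub_cancel] at this
    rw [abs_of_nonpos (sub_nonpos.2 h1), abs_of_nonneg (sub_nonneg.2 h)]
    linarith
lemma g_zero (α : ℝ) : g α 0 = 0 := by simp [g]

lemma g_one {α : ℝ} (hα1 : α < 1) : g α 1 = 0 := by
  have h : (1:ℝ) - 4 * (1 - α) * 1 * (1 - 1) = 1 := by ring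
  rw [g, if_neg one_ne_zero, h, Real.sqrt_one]
  norm_num

/-- All the bounds for g on [0,1] in one lemma. -/
lemma g_bounds {α x : ℝ} (hα0 : 0 ≤ α) (hα1 : α < 1) (hx0 : 0 ≤ x) (hx1 : x ≤ 1) :
    (1 - α) * x * (1 - x)^3 ≤ g α x ∧ g α x ≤ (1 - α) * x ∧ g α x ≤ (1 - α) / 2 := by
  rcases eq_or_lt_of_le hx0 with h0 | hxpos
  · rw [← h0, g_zero]
    exact ⟨by nlinarith, by nlinarith, by linarith⟩
  rcases eq_or_lt_of_le hx1 with h1 | hx1'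
  · rw [h1, g_one hα1]
    exact ⟨by nlinarith, by nlinarith, by linarith⟩
  have hα : 0 < 1 - α := by linarith
  set E := 4 * (1 - α) * x * (1 - x) with hE
  have hE0 : 0 ≤ E := by
    have := mul_nonneg (mul_nonneg (by linarith : (0:ℝ) ≤ 4 * (1 - α)) hx0)
      (by linarith : (0:ℝ) ≤ 1 - x)
    linarith [this]
  have hEle : 1 - E ≥ (1 - 2*x)^2 := by nlinarith
  have h1E : 0 ≤ 1 - E := le_trans (sq_nonneg _) hEle
  set s := Real.sqrt (1 - E) with hs
  have hs0 : 0 ≤ s := Real.sqrt_nonneg _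
  have hs1 : s ≤ 1 := Real.sqrt_le_one.2 (by linarith)
  have hssq : s^2 = 1 - E := Real.sq_sqrt h1E
  have hsge : 1 - 2*x ≤ s := by
    rcases le_total (1 - 2*x) 0 with h | h
    · linarith
    · exact (Real.le_sqrt h h1E).2 hEle
  have hsgea : α ≤ s := by
    apply (Real.le_sqrt hα0 h1E).2
    nlinarith
  have key : (1 - s) * (1 + s) = E := by
    have h' : (1 - s) * (1 + s) = 1 - s^2 := by ring
    rw [h', hssq]; ring
  have hnum0 : 0 ≤ 1 - s := by linarith
  have hlow : E / 2 ≤ 1 - s := by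
    have := mul_le_mul_of_nonneg_left (by linarith : 1 + s ≤ 2) hnum0
    linarith
  have h2x : (0:ℝ) < 2 * (1 - x) := by linarith
  have hup : 1 - s ≤ 2 * (1 - α) * x := by
    apply le_of_mul_le_mul_right _ h2x
    have hE2 : (2*(1-α)*x) * (2*(1-x)) = E := by rw [hE]; ring
    have hupD : (1 - s) * (2 * (1 - x)) ≤ E := by
      have := mul_le_mul_of_nonneg_left (by linarith : 2 * (1 - x) ≤ 1 + s) hnum0
      linarith
    linarith [hE2 ▸ hupD]
  have hD : 0 < 8 * (1 - α)^2 * x^2 := by positivity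
  rw [g, if_neg (ne_of_gt hxpos), ← hE, ← hs]
  refine ⟨?_, ?_, ?_⟩
  · rw [le_div_iff₀ hD]
    have hcube : (E/2)^3 ≤ (1-s)^3 := pow_le_pow_left₀ (by positivity) hlow 3
    have heq : (E/2)^3 = (1-α)*x*(1-x)^3 * (8*(1-α)^2*x^2) := by rw [hE]; ring
    linarith [heq ▸ hcube]
  · rw [div_le_iff₀ hD]
    have hcube : (1-s)^3 ≤ (2*(1-α)*x)^3 := pow_le_pow_left₀ hnum0 hup 3
    have heq : (2*(1-α)*x)^3 = (1-α)*x * (8*(1-α)^2*x^2) := by ring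
    linarith [heq ▸ hcube]
  · rw [div_le_iff₀ hD]
    have hsq : (1-s)^2 ≤ (2*(1-α)*x)^2 := pow_le_pow_left₀ hnum0 hup 2
    have h1s : 1 - s ≤ 1 - α := by linarith
    have hc : (1-s)^3 = (1-s)*(1-s)^2 := by ring
    rw [hc]
    have heq : (1-α)*(2*(1-α)*x)^2 = (1-α)/2 * (8*(1-α)^2*x^2) := by ring
    calc (1-s)*(1-s)^2 ≤ (1-α)*(2*(1-α)*x)^2 :=
          mul_le_mul h1s hsq (by positivity) (by linarith)
      _ = (1-α)/2 * (8*(1-α)^2*x^2) := heq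
lemma continuousOn_g {α : ℝ} (hα0 : 0 ≤ α) (hα1 : α < 1) :
    ContinuousOn (g α) (Icc 0 1) := by
  intro x hx
  rcases eq_or_lt_of_le hx.1 with h0 | hxpos
  · -- continuity at 0 within Icc, by squeeze
    rw [← h0]
    unfold ContinuousWithinAt
    rw [g_zero]
    apply squeeze_zero' (f := fun y => g α y) (g := fun y => (1 - α) * y)
    · filter_upwards [self_mem_nhdsWithin] with y hy
      have h := (g_bounds hα0 hα1 hy.1 hy.2).1
      have h2 : 0 ≤ (1 - α) * y * (1 - y)^3 :=
        mul_nonneg (mul_nonneg (by linarith) hy.1) (pow_nonneg (by linarith [hy.2]) 3)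
      linarith
    · filter_upwards [self_mem_nhdsWithin] with y hy
      exact (g_bounds hα0 hα1 hy.1 hy.2).2.1
    · have h : Tendsto (fun y : ℝ => (1 - α) * y) (𝓝 0) (𝓝 ((1-α) * 0)) :=
        (continuous_const.mul continuous_id).tendsto 0
      rw [mul_zero] at h
      exact h.mono_left nhdsWithin_le_nhds
  · -- continuity at x ≠ 0
    apply ContinuousAt.continuousWithinAt
    have hca : ContinuousAt (fun y : ℝ =>
        (1 - Real.sqrt (1 - 4 * (1 - α) * y * (1 - y))) ^ 3 / (8 * (1 - α) ^ 2 * y ^ 2)) x := by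
      apply ContinuousAt.div
      · apply ContinuousAt.pow
        apply ContinuousAt.sub continuousAt_const
        exact (Real.continuous_sqrt.continuousAt).comp (by fun_prop)
      · fun_prop
      · have h1 : (0:ℝ) < (1 - α)^2 := by nlinarith
        have h2 : (0:ℝ) < x^2 := by nlinarith
        have : (0:ℝ) < 8 * (1 - α)^2 * x^2 := by nlinarith
        exact this.ne'
    apply hca.congr
    filter_upwards [eventually_ne_nhds hxpos.ne'] with y hy
    rw [g, if_neg hy]

section SEC2
variable {α β₁ β₂ : ℝ}

lemma bddAbove_g_image (hα0 : 0 ≤ α) (hα1 : α < 1) : BddAbove (g α '' Icc 0 1) := by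
  refine ⟨(1-α)/2, ?_⟩
  rintro z ⟨y, hy, rfl⟩
  exact (g_bounds hα0 hα1 hy.1 hy.2).2.2

lemma g_le_pbar (hα0 : 0 ≤ α) (hα1 : α < 1) {x : ℝ} (hx : x ∈ Icc (0:ℝ) 1) :
    g α x ≤ pbar α :=
  le_csSup (bddAbove_g_image hα0 hα1) ⟨x, hx, rfl⟩

lemma pbar_nonneg (hα0 : 0 ≤ α) (hα1 : α < 1) : 0 ≤ pbar α := by
  have h := g_le_pbar hα0 hα1 (x := 0) (by simp)
  rwa [g_zero] at h

lemma pbar_le_half (hα0 : 0 ≤ α) (hα1 : α < 1) : pbar α ≤ (1-α)/2 := by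
  have hne : (g α '' Icc 0 1).Nonempty := ⟨g α 0, ⟨0, by simp, rfl⟩⟩
  apply csSup_le hne
  rintro z ⟨y, hy, rfl⟩
  exact (g_bounds hα0 hα1 hy.1 hy.2).2.2

lemma one_sub_exp_mem (hβ : 0 < β₂) {x : ℝ} (hx : 0 ≤ x) :
    1 - Real.exp (-(β₂ * x)) ∈ Icc (0:ℝ) 1 := by
  constructor
  · have : Real.exp (-(β₂*x)) ≤ 1 := Real.exp_le_one_iff.2 (by nlinarith)
    linarith
  · linarith [Real.exp_pos (-(β₂*x))]

lemma tmap_mem (hα0 : 0 ≤ α) (hα1 : α < 1) (hβ : 0 < β₂) {x : ℝ} (hx : 0 ≤ x) :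
    tmap α β₂ x ∈ Icc (0:ℝ) ((1-α)/2) := by
  have h := one_sub_exp_mem hβ hx (β₂ := β₂)
  have hb := g_bounds hα0 hα1 h.1 h.2
  have h0 : 0 ≤ (1-α) * (1 - Real.exp (-(β₂*x))) * (1 - (1 - Real.exp (-(β₂*x))))^3 := by
    apply mul_nonneg (mul_nonneg (by linarith) h.1) (pow_nonneg (by linarith [h.2]) 3)
  exact ⟨by rw [tmap]; linarith [hb.1], by rw [tmap]; linarith [hb.2.2]⟩

lemma tmap_iter_mem (hα0 : 0 ≤ α) (hα1 : α < 1) (hβ : 0 < β₂) {x : ℝ}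
    (hx : x ∈ Icc (0:ℝ) 1) (k : ℕ) : (tmap α β₂)^[k] x ∈ Icc (0:ℝ) 1 := by
  induction k with
  | zero => simpa using hx
  | succ n ih =>
    rw [Function.iterate_succ_apply']
    have := tmap_mem hα0 hα1 hβ ih.1
    exact ⟨this.1, this.2.trans (by linarith [hα0])⟩

lemma continuousOn_tmap (hα0 : 0 ≤ α) (hα1 : α < 1) (hβ : 0 < β₂) :
    ContinuousOn (tmap α β₂) (Icc 0 1) := by
  apply (continuousOn_g hα0 hα1).comp (Continuous.continuousOn (by fun_prop))
  intro x hx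
  exact one_sub_exp_mem hβ hx.1

/-- ε-δ uniform continuity on [0,1] from continuity. -/
lemma unif_of_contOn {f : ℝ → ℝ} (hf : ContinuousOn f (Icc 0 1)) :
    ∀ ε > (0:ℝ), ∃ δ > (0:ℝ), ∀ x ∈ Icc (0:ℝ) 1, ∀ y ∈ Icc (0:ℝ) 1,
      |x - y| ≤ δ → |f x - f y| ≤ ε := by
  intro ε hε
  have h := (isCompact_Icc.uniformContinuousOn_of_continuous hf)
  rw [Metric.uniformContinuousOn_iff] at h
  obtain ⟨δ, hδ, hd⟩ := h ε hε
  refine ⟨δ/2, by linarith, fun x hx y hy hxy => ?_⟩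
  have := hd x hx y hy (by rw [Real.dist_eq]; linarith)
  rw [Real.dist_eq] at this
  linarith

end SEC2

section SEC3
variable {α₁ α₂ β₁ β₂ : ℝ}

lemma exp4B (B : ℝ) : Real.exp (-(4*B)) = Real.exp (-B) * (Real.exp (-B))^3 := by
  rw [← Real.exp_nat_mul, ← Real.exp_add]
  norm_num
  ring_nf

set_option maxHeartbeats 2000000 in
/-- Properties of one application of `hmap` from a state in the open triangle. -/
lemma step_all (hα₁ : α₁ ∈ Set.Ico (0:ℝ) 1) (hα₂ : α₂ ∈ Set.Ico (0:ℝ) 1)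
    (hβ₁ : 0 < β₁) (hβ₂ : 0 < β₂) {q : ℝ × ℝ}
    (h1 : 0 < q.1) (h2 : 0 < q.2) (hs : q.1 + q.2 ≤ 1) :
    (0 < (hmap α₁ α₂ β₁ β₂ q).1 ∧ 0 < (hmap α₁ α₂ β₁ β₂ q).2 ∧
      (hmap α₁ α₂ β₁ β₂ q).1 ≤ (1-α₁)/2 ∧ (hmap α₁ α₂ β₁ β₂ q).2 ≤ (1-α₂)/2 ∧
      (hmap α₁ α₂ β₁ β₂ q).2 ≤ pbar α₂) ∧
    ((1-α₁)*β₁ * Real.exp (-(4*(β₁+β₂))) * q.1 ≤ (hmap α₁ α₂ β₁ β₂ q).1) ∧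
    ((1-α₂)*β₂ * Real.exp (-(4*(β₁+β₂))) * q.2 ≤ (hmap α₁ α₂ β₁ β₂ q).2) ∧
    (β₁*q.1 ≤ 1 →
      (1-α₁)*β₁ * ((psi (β₂*q.2) - β₁*q.1) * (1 - β₁*q.1)^3) * q.1 ≤ (hmap α₁ α₂ β₁ β₂ q).1) ∧
    (β₂*q.2 ≤ 1 →
      (1-α₂)*β₂ * ((psi (β₁*q.1) - β₂*q.2) * (1 - β₂*q.2)^3) * q.2 ≤ (hmap α₁ α₂ β₁ β₂ q).2) ∧
    (f2 β₁ β₂ q ∈ Set.Icc (0:ℝ) 1 ∧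
      |f2 β₁ β₂ q - (1 - Real.exp (-(β₂*q.2)))| ≤ β₁*β₂*q.1) := by
  obtain ⟨hα₁0, hα₁1⟩ := hα₁
  obtain ⟨hα₂0, hα₂1⟩ := hα₂
  set S := Sig β₁ β₂ q with hS
  have hq1 : q.1 ≤ 1 := by linarith
  have hq2 : q.2 ≤ 1 := by linarith
  have hSpos : 0 < S := by
    rw [hS, Sig]; positivity
  have hSne : S ≠ 0 := ne_of_gt hSpos
  have hSB : S ≤ β₁ + β₂ := by
    rw [hS, Sig]; nlinarith
  set B := β₁ + β₂ with hB
  have hBpos : 0 < B := by positivity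
  have heB : Real.exp (-B) ≤ Real.exp (-S) := Real.exp_le_exp.2 (by linarith)
  have hf1eq : f1 β₁ β₂ q = psi S * (β₁ * q.1) := by
    rw [f1, if_neg hSne, psi, if_neg hSne]; ring
  have hf2eq : f2 β₁ β₂ q = psi S * (β₂ * q.2) := by
    rw [f2, if_neg hSne, psi, if_neg hSne]; ring
  have hψS1 : psi S ≤ 1 := psi_le_one hSpos.le
  have hψSe : Real.exp (-S) ≤ psi S := exp_le_psi hSpos.le
  have hψS0 : 0 < psi S := psi_pos hSpos.le
  -- f1 facts
  have hf1pos : 0 < f1 β₁ β₂ q := by rw [hf1eq]; positivity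
  have hf1le : f1 β₁ β₂ q ≤ β₁ * q.1 := by
    rw [hf1eq]; nlinarith
  have hf1leS : 1 - f1 β₁ β₂ q ≥ Real.exp (-S) := by
    rw [f1, if_neg hSne]
    have hd : (1 - Real.exp (-S)) * (β₁ * q.1) / S ≤ (1 - Real.exp (-S)) := by
      rw [div_le_iff₀ hSpos]
      have h' : β₁ * q.1 ≤ S := by rw [hS, Sig]; nlinarith
      nlinarith [Real.exp_pos (-S), Real.add_one_le_exp (-S)]
    linarith
  have hf1lt1 : f1 β₁ β₂ q < 1 := by linarith [Real.exp_pos (-S)]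
  have hf1mem : f1 β₁ β₂ q ∈ Set.Icc (0:ℝ) 1 := ⟨hf1pos.le, hf1lt1.le⟩
  -- f2 facts
  have hf2pos : 0 < f2 β₁ β₂ q := by rw [hf2eq]; positivity
  have hf2le : f2 β₁ β₂ q ≤ β₂ * q.2 := by
    rw [hf2eq]; nlinarith
  have hf2leS : 1 - f2 β₁ β₂ q ≥ Real.exp (-S) := by
    rw [f2, if_neg hSne]
    have hd : (1 - Real.exp (-S)) * (β₂ * q.2) / S ≤ (1 - Real.exp (-S)) := by
      rw [div_le_iff₀ hSpos]
      have h' : β₂ * q.2 ≤ S := by rw [hS, Sig]; nlinarith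
      nlinarith [Real.exp_pos (-S), Real.add_one_le_exp (-S)]
    linarith
  have hf2lt1 : f2 β₁ β₂ q < 1 := by linarith [Real.exp_pos (-S)]
  have hf2mem : f2 β₁ β₂ q ∈ Set.Icc (0:ℝ) 1 := ⟨hf2pos.le, hf2lt1.le⟩
  -- images
  have hg1 := g_bounds hα₁0 hα₁1 hf1mem.1 hf1mem.2
  have hg2 := g_bounds hα₂0 hα₂1 hf2mem.1 hf2mem.2
  have hm1 : (hmap α₁ α₂ β₁ β₂ q).1 = g α₁ (f1 β₁ β₂ q) := rfl
  have hm2 : (hmap α₁ α₂ β₁ β₂ q).2 = g α₂ (f2 β₁ β₂ q) := rfl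
  have hpos1 : 0 < (hmap α₁ α₂ β₁ β₂ q).1 := by
    rw [hm1]
    have : 0 < (1-α₁) * f1 β₁ β₂ q * (1 - f1 β₁ β₂ q)^3 := by
      apply mul_pos (mul_pos (by linarith) hf1pos) (pow_pos (by linarith) 3)
    linarith [hg1.1]
  have hpos2 : 0 < (hmap α₁ α₂ β₁ β₂ q).2 := by
    rw [hm2]
    have : 0 < (1-α₂) * f2 β₁ β₂ q * (1 - f2 β₁ β₂ q)^3 := by
      apply mul_pos (mul_pos (by linarith) hf2pos) (pow_pos (by linarith) 3)
    linarith [hg2.1]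
  refine ⟨⟨hpos1, hpos2, by rw [hm1]; exact hg1.2.2, by rw [hm2]; exact hg2.2.2,
    by rw [hm2]; exact g_le_pbar hα₂0 hα₂1 hf2mem⟩, ?_, ?_, ?_, ?_, ⟨hf2mem, ?_⟩⟩
  · -- crude lower bound, type 1
    have L1 : Real.exp (-B) * (β₁ * q.1) ≤ f1 β₁ β₂ q := by
      rw [hf1eq]
      apply mul_le_mul_of_nonneg_right (heB.trans hψSe) (by positivity)
    have L2 : (Real.exp (-B))^3 ≤ (1 - f1 β₁ β₂ q)^3 := by
      apply pow_le_pow_left₀ (Real.exp_nonneg _) (heB.trans hf1leS)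
    have L3 : (1-α₁) * (Real.exp (-B) * (β₁*q.1)) * (Real.exp (-B))^3 ≤
        (1-α₁) * f1 β₁ β₂ q * (1 - f1 β₁ β₂ q)^3 := by
      apply mul_le_mul (mul_le_mul_of_nonneg_left L1 (by linarith)) L2
        (pow_nonneg (Real.exp_nonneg _) 3)
      exact (mul_pos (show (0:ℝ) < 1-α₁ by linarith) hf1pos).le
    have heq : (1-α₁)*β₁ * Real.exp (-(4*B)) * q.1 =
        (1-α₁) * (Real.exp (-B) * (β₁*q.1)) * (Real.exp (-B))^3 := by
      rw [exp4B]; ring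
    rw [hm1, heq]
    linarith [hg1.1, L3]
  · -- crude lower bound, type 2
    have L1 : Real.exp (-B) * (β₂ * q.2) ≤ f2 β₁ β₂ q := by
      rw [hf2eq]
      apply mul_le_mul_of_nonneg_right (heB.trans hψSe) (by positivity)
    have L2 : (Real.exp (-B))^3 ≤ (1 - f2 β₁ β₂ q)^3 := by
      apply pow_le_pow_left₀ (Real.exp_nonneg _) (heB.trans hf2leS)
    have L3 : (1-α₂) * (Real.exp (-B) * (β₂*q.2)) * (Real.exp (-B))^3 ≤
        (1-α₂) * f2 β₁ β₂ q * (1 - f2 β₁ β₂ q)^3 := by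
      apply mul_le_mul (mul_le_mul_of_nonneg_left L1 (by linarith)) L2
        (pow_nonneg (Real.exp_nonneg _) 3)
      exact (mul_pos (show (0:ℝ) < 1-α₂ by linarith) hf2pos).le
    have heq : (1-α₂)*β₂ * Real.exp (-(4*B)) * q.2 =
        (1-α₂) * (Real.exp (-B) * (β₂*q.2)) * (Real.exp (-B))^3 := by
      rw [exp4B]; ring
    rw [hm2, heq]
    linarith [hg2.1, L3]
  · -- refined lower bound, type 1
    intro hb1
    have hψlow : psi (β₂*q.2) - β₁*q.1 ≤ psi S := by
      have h' := psi_lower (a := β₂*q.2) (b := β₁*q.1) (by positivity) (by positivity)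
      have hsum : β₂*q.2 + β₁*q.1 = S := by rw [hS, Sig]; ring
      rwa [hsum] at h'
    rcases le_or_gt (psi (β₂*q.2) - β₁*q.1) 0 with hc | hc
    · have hL : (1-α₁)*β₁ * ((psi (β₂*q.2) - β₁*q.1) * (1 - β₁*q.1)^3) * q.1 ≤ 0 := by
        have h3 : (0:ℝ) ≤ (1 - β₁*q.1)^3 := pow_nonneg (by linarith) 3
        have hX : (psi (β₂*q.2) - β₁*q.1) * (1 - β₁*q.1)^3 ≤ 0 := mul_nonpos_of_nonpos_of_nonneg hc h3
        have h4 : 0 ≤ (1-α₁)*β₁*q.1 := mul_nonneg (mul_nonneg (by linarith) hβ₁.le) h1.le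
        nlinarith [mul_nonneg h4 (neg_nonneg.2 hX)]
      linarith [hpos1]
    · have L1 : (psi (β₂*q.2) - β₁*q.1) * (β₁ * q.1) ≤ f1 β₁ β₂ q := by
        rw [hf1eq]
        apply mul_le_mul_of_nonneg_right hψlow (by positivity)
      have L2 : (1 - β₁*q.1)^3 ≤ (1 - f1 β₁ β₂ q)^3 := by
        apply pow_le_pow_left₀ (by linarith) (by linarith)
      have L3 : (1-α₁) * ((psi (β₂*q.2) - β₁*q.1) * (β₁*q.1)) * (1 - β₁*q.1)^3 ≤
          (1-α₁) * f1 β₁ β₂ q * (1 - f1 β₁ β₂ q)^3 := by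
        apply mul_le_mul (mul_le_mul_of_nonneg_left L1 (by linarith)) L2
          (pow_nonneg (by linarith) 3)
        exact (mul_pos (show (0:ℝ) < 1-α₁ by linarith) hf1pos).le
      have heq : (1-α₁)*β₁ * ((psi (β₂*q.2) - β₁*q.1) * (1 - β₁*q.1)^3) * q.1 =
          (1-α₁) * ((psi (β₂*q.2) - β₁*q.1) * (β₁*q.1)) * (1 - β₁*q.1)^3 := by ring
      rw [hm1, heq]
      linarith [hg1.1, L3]
  · -- refined lower bound, type 2
    intro hb2
    have hψlow : psi (β₁*q.1) - β₂*q.2 ≤ psi S := by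
      have h' := psi_lower (a := β₁*q.1) (b := β₂*q.2) (by positivity) (by positivity)
      have hsum : β₁*q.1 + β₂*q.2 = S := by rw [hS, Sig]
      rwa [hsum] at h'
    rcases le_or_gt (psi (β₁*q.1) - β₂*q.2) 0 with hc | hc
    · have hL : (1-α₂)*β₂ * ((psi (β₁*q.1) - β₂*q.2) * (1 - β₂*q.2)^3) * q.2 ≤ 0 := by
        have h3 : (0:ℝ) ≤ (1 - β₂*q.2)^3 := pow_nonneg (by linarith) 3
        have hX : (psi (β₁*q.1) - β₂*q.2) * (1 - β₂*q.2)^3 ≤ 0 := mul_nonpos_of_nonpos_of_nonneg hc h3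
        have h4 : 0 ≤ (1-α₂)*β₂*q.2 := mul_nonneg (mul_nonneg (by linarith) hβ₂.le) h2.le
        nlinarith [mul_nonneg h4 (neg_nonneg.2 hX)]
      linarith [hpos2]
    · have L1 : (psi (β₁*q.1) - β₂*q.2) * (β₂ * q.2) ≤ f2 β₁ β₂ q := by
        rw [hf2eq]
        apply mul_le_mul_of_nonneg_right hψlow (by positivity)
      have L2 : (1 - β₂*q.2)^3 ≤ (1 - f2 β₁ β₂ q)^3 := by
        apply pow_le_pow_left₀ (by linarith) (by linarith)
      have L3 : (1-α₂) * ((psi (β₁*q.1) - β₂*q.2) * (β₂*q.2)) * (1 - β₂*q.2)^3 ≤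
          (1-α₂) * f2 β₁ β₂ q * (1 - f2 β₁ β₂ q)^3 := by
        apply mul_le_mul (mul_le_mul_of_nonneg_left L1 (by linarith)) L2
          (pow_nonneg (by linarith) 3)
        exact (mul_pos (show (0:ℝ) < 1-α₂ by linarith) hf2pos).le
      have heq : (1-α₂)*β₂ * ((psi (β₁*q.1) - β₂*q.2) * (1 - β₂*q.2)^3) * q.2 =
          (1-α₂) * ((psi (β₁*q.1) - β₂*q.2) * (β₂*q.2)) * (1 - β₂*q.2)^3 := by ring
      rw [hm2, heq]
      linarith [hg2.1, L3]
  · -- pseudo-orbit one-step error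
    have hx2 : 1 - Real.exp (-(β₂*q.2)) = psi (β₂*q.2) * (β₂*q.2) := by
      rw [psi, if_neg (ne_of_gt (mul_pos hβ₂ h2))]
      field_simp
    have hlip : |psi S - psi (β₂*q.2)| ≤ |S - β₂*q.2| :=
      psi_lipschitz hSpos.le (by positivity)
    have hdiff : |S - β₂*q.2| = β₁*q.1 := by
      rw [hS, Sig, add_sub_cancel_right, abs_of_pos (by positivity)]
    have heq2 : f2 β₁ β₂ q - (1 - Real.exp (-(β₂*q.2))) = (β₂*q.2) * (psi S - psi (β₂*q.2)) := by
      rw [hf2eq, hx2]; ring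
    rw [heq2, abs_mul, abs_of_pos (mul_pos hβ₂ h2)]
    calc (β₂*q.2) * |psi S - psi (β₂*q.2)| ≤ (β₂*q.2) * (β₁*q.1) := by
          apply mul_le_mul_of_nonneg_left (by rw [hdiff] at hlip; exact hlip) (by positivity)
      _ ≤ β₁*β₂*q.1 := by nlinarith [mul_nonneg (mul_nonneg hβ₁.le hβ₂.le) h1.le, hq2]
end SEC3

section SEC4
variable {α₂ β₂ : ℝ}

lemma continuousOn_psi : ContinuousOn psi (Ici (0:ℝ)) := by
  apply LipschitzOnWith.continuousOn (K := 1)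
  apply LipschitzOnWith.of_dist_le_mul
  intro x hx y hy
  rw [Real.dist_eq, Real.dist_eq, NNReal.coe_one, one_mul]
  exact psi_lipschitz hx hy

/-- From the liminf hypothesis, extract a uniform block length N by compactness. -/
lemma exists_N (hα₂ : α₂ ∈ Set.Ico (0:ℝ) 1) (hβ₂ : 0 < β₂) {θ : ℝ} (hθ0 : 0 < θ)
    (hθ : ∀ x ∈ Icc (0:ℝ) (pbar α₂), θ < Filter.liminf
      (fun n : ℕ => (∏ k ∈ Finset.range n, psi (β₂ * (tmap α₂ β₂)^[k] x)) ^ (1 / (n : ℝ)))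
      Filter.atTop) :
    ∃ N : ℕ, 1 ≤ N ∧ ∀ y ∈ Icc (0:ℝ) (pbar α₂), ∃ n, 1 ≤ n ∧ n ≤ N ∧
      θ^n < ∏ k ∈ Finset.range n, psi (β₂ * (tmap α₂ β₂)^[k] y) := by
  obtain ⟨hα₂0, hα₂1⟩ := hα₂
  have hK : Icc (0:ℝ) (pbar α₂) ⊆ Icc (0:ℝ) 1 := by
    apply Icc_subset_Icc le_rfl
    linarith [pbar_le_half hα₂0 hα₂1]
  -- clamp and modified map
  set cl : ℝ → ℝ := fun y => max 0 (min y 1) with hcl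
  have hclmem : ∀ y, cl y ∈ Icc (0:ℝ) 1 := by
    intro y
    exact ⟨le_max_left _ _, max_le zero_le_one (min_le_right y 1)⟩
  have hcleq : ∀ y ∈ Icc (0:ℝ) 1, cl y = y := by
    intro y hy
    simp [hcl, min_eq_left hy.2, max_eq_right hy.1]
  have hclcont : Continuous cl := by fun_prop
  set T : ℝ → ℝ := fun y => tmap α₂ β₂ (cl y) with hT
  have hTcont : Continuous T :=
    (continuousOn_tmap hα₂0 hα₂1 hβ₂).comp_continuous hclcont hclmem
  have hTmem : ∀ y, T y ∈ Icc (0:ℝ) 1 := by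
    intro y
    have := tmap_mem hα₂0 hα₂1 hβ₂ (hclmem y).1
    exact ⟨this.1, this.2.trans (by linarith)⟩
  have hTiter : ∀ y ∈ Icc (0:ℝ) 1, ∀ k, T^[k] y ∈ Icc (0:ℝ) 1 := by
    intro y hy k
    induction k with
    | zero => simpa using hy
    | succ n ih => rw [Function.iterate_succ_apply']; exact hTmem _
  have hTeq : ∀ y ∈ Icc (0:ℝ) 1, ∀ k, T^[k] y = (tmap α₂ β₂)^[k] y := by
    intro y hy k
    induction k with
    | zero => simp
    | succ n ih =>
      rw [Function.iterate_succ_apply', Function.iterate_succ_apply', ih, hT]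
      have hmem := (ih ▸ hTiter y hy n)
      simp only
      rw [hcleq _ hmem]
  -- continuous surrogate for the product
  set Q : ℕ → ℝ → ℝ := fun n y => ∏ k ∈ Finset.range n, psi (β₂ * T^[k] (cl y)) with hQ
  have hQcont : ∀ n, Continuous (Q n) := by
    intro n
    apply continuous_finset_prod
    intro k _
    apply continuousOn_psi.comp_continuous
    · exact continuous_const.mul ((hTcont.iterate k).comp hclcont)
    · intro y
      have : T^[k] (cl y) ∈ Icc (0:ℝ) 1 := hTiter _ (hclmem y) k
      have h0 : 0 ≤ β₂ * T^[k] (cl y) := mul_nonneg hβ₂.le this.1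
      exact h0
  have hQeq : ∀ y ∈ Icc (0:ℝ) 1, ∀ n,
      Q n y = ∏ k ∈ Finset.range n, psi (β₂ * (tmap α₂ β₂)^[k] y) := by
    intro y hy n
    simp only [hQ]
    apply Finset.prod_congr rfl
    intro k _
    rw [hcleq y hy, hTeq y hy k]
  -- cover
  set U : ℕ → Set ℝ := fun m => {y | θ^(m+1) < Q (m+1) y} with hU
  have hUopen : ∀ m, IsOpen (U m) := fun m => isOpen_lt continuous_const (hQcont (m+1))
  have hcover : Icc (0:ℝ) (pbar α₂) ⊆ ⋃ m, U m := by
    intro x hx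
    have hx1 : x ∈ Icc (0:ℝ) 1 := hK hx
    -- liminf > θ gives some n ≥ 1 with θ^n < P n x
    have hbdd : Filter.IsBoundedUnder (· ≥ ·) Filter.atTop
        (fun n : ℕ => (∏ k ∈ Finset.range n, psi (β₂ * (tmap α₂ β₂)^[k] x)) ^ (1 / (n : ℝ))) := by
      refine ⟨0, Filter.eventually_map.2 (Filter.Eventually.of_forall fun n => ?_)⟩
      apply Real.rpow_nonneg
      apply Finset.prod_nonneg
      intro k _
      exact (psi_pos (mul_nonneg hβ₂.le (tmap_iter_mem hα₂0 hα₂1 hβ₂ hx1 k).1)).le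
    have hev := Filter.eventually_lt_of_lt_liminf (hθ x hx) hbdd
    obtain ⟨n₀, hn₀⟩ := Filter.eventually_atTop.1 hev
    set n := max n₀ 1 with hn
    have hn1 : 1 ≤ n := le_max_right _ _
    have hlt := hn₀ n (le_max_left _ _)
    have hprodnn : 0 ≤ ∏ k ∈ Finset.range n, psi (β₂ * (tmap α₂ β₂)^[k] x) := by
      apply Finset.prod_nonneg
      intro k _
      exact (psi_pos (mul_nonneg hβ₂.le (tmap_iter_mem hα₂0 hα₂1 hβ₂ hx1 k).1)).le
    have hkey : θ^n < ∏ k ∈ Finset.range n, psi (β₂ * (tmap α₂ β₂)^[k] x) := by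
      have hpow := pow_lt_pow_left₀ hlt hθ0.le (by omega : n ≠ 0)
      have hre : ((∏ k ∈ Finset.range n, psi (β₂ * (tmap α₂ β₂)^[k] x)) ^ (1/(n:ℝ)))^n
          = ∏ k ∈ Finset.range n, psi (β₂ * (tmap α₂ β₂)^[k] x) := by
        rw [← Real.rpow_natCast (_ ^ (1/(n:ℝ))) n, ← Real.rpow_mul hprodnn,
          one_div, inv_mul_cancel₀ (by exact_mod_cast (by omega : n ≠ 0)), Real.rpow_one]
      rw [hre] at hpow
      exact hpow
    refine Set.mem_iUnion.2 ⟨n - 1, ?_⟩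
    have hn' : n - 1 + 1 = n := by omega
    simp only [hU, Set.mem_setOf_eq, hn']
    rw [hQeq x hx1 n]
    exact hkey
  obtain ⟨t, ht⟩ := isCompact_Icc.elim_finite_subcover U hUopen hcover
  refine ⟨t.sup id + 1, by omega, ?_⟩
  intro y hy
  obtain ⟨m, hmt, hym⟩ := Set.mem_iUnion₂.1 (ht hy)
  refine ⟨m + 1, by omega, ?_, ?_⟩
  · have : m ≤ t.sup id := by simpa using Finset.le_sup (f := id) hmt
    omega
  · have := hym
    rw [hU] at this
    simp only [Set.mem_setOf_eq] at this
    rwa [hQeq y (hK hy) (m+1)] at this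
end SEC4

set_option maxHeartbeats 4000000 in
theorem stmt15 (α₁ α₂ β₁ β₂ : ℝ)
    (hα₁ : α₁ ∈ Set.Ico (0 : ℝ) 1) (hα₂ : α₂ ∈ Set.Ico (0 : ℝ) 1)
    (hβ₁ : 0 < β₁) (hβ₂ : 0 < β₂)
    (hφ₁ : 1 < (1 - α₁) * β₁) (hφ₁₂ : (1 - α₁) * β₁ < (1 - α₂) * β₂)
    (hφ₂ : 2 * Real.log 2 < (1 - α₂) * β₂)
    (hσ : 1 < (1 - α₁) * β₁ * sigma α₂ β₂) :
    ∀ p : ℝ × ℝ, p.1 ∈ Set.Ioo (0 : ℝ) 1 → p.2 ∈ Set.Ioo (0 : ℝ) 1 → p.1 + p.2 ≤ 1 →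
      0 < Filter.liminf (fun k : ℕ => ((hmap α₁ α₂ β₁ β₂)^[k] p).1) Filter.atTop ∧
      0 < Filter.liminf (fun k : ℕ => ((hmap α₁ α₂ β₁ β₂)^[k] p).2) Filter.atTop := by
  obtain ⟨hα₁0, hα₁1⟩ := id hα₁
  obtain ⟨hα₂0, hα₂1⟩ := id hα₂
  have hφ₁0 : 0 < (1 - α₁) * β₁ := by linarith
  have hφ₂0 : 0 < (1 - α₂) * β₂ := by nlinarith
  intro p hp1 hp2 hsum
  set F := hmap α₁ α₂ β₁ β₂ with hF
  set a : ℕ → ℝ := fun k => (F^[k] p).1 with ha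
  set b : ℕ → ℝ := fun k => (F^[k] p).2 with hb
  have hit : ∀ k, F^[k+1] p = hmap α₁ α₂ β₁ β₂ (F^[k] p) := by
    intro k; rw [hF, Function.iterate_succ_apply']
  -- basic invariants
  have hG : ∀ k, 0 < a k ∧ 0 < b k ∧ a k + b k ≤ 1 := by
    intro k
    induction k with
    | zero => exact ⟨hp1.1, hp2.1, hsum⟩
    | succ n ih =>
      have hs := (step_all hα₁ hα₂ hβ₁ hβ₂ ih.1 ih.2.1 ih.2.2).1
      have e1 : a (n+1) = (hmap α₁ α₂ β₁ β₂ (F^[n] p)).1 := by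
        simp only [ha]; rw [hit n]
      have e2 : b (n+1) = (hmap α₁ α₂ β₁ β₂ (F^[n] p)).2 := by
        simp only [hb]; rw [hit n]
      rw [e1, e2]
      exact ⟨hs.1, hs.2.1, by linarith [hs.2.2.1, hs.2.2.2.1]⟩
  have SA := fun k => step_all hα₁ hα₂ hβ₁ hβ₂ (hG k).1 (hG k).2.1 (hG k).2.2
  have ea : ∀ k, a (k+1) = (hmap α₁ α₂ β₁ β₂ (F^[k] p)).1 := by
    intro k; simp only [ha]; rw [hit k]
  have eb : ∀ k, b (k+1) = (hmap α₁ α₂ β₁ β₂ (F^[k] p)).2 := by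
    intro k; simp only [hb]; rw [hit k]
  have hG2 : ∀ k, a (k+1) ≤ (1-α₁)/2 ∧ b (k+1) ≤ (1-α₂)/2 ∧ b (k+1) ≤ pbar α₂ := by
    intro k
    rw [ea k, eb k]
    exact ⟨(SA k).1.2.2.1, (SA k).1.2.2.2.1, (SA k).1.2.2.2.2⟩
  have crude1 : ∀ k, (1-α₁)*β₁ * Real.exp (-(4*(β₁+β₂))) * a k ≤ a (k+1) := by
    intro k; rw [ea k]; exact (SA k).2.1
  have crude2 : ∀ k, (1-α₂)*β₂ * Real.exp (-(4*(β₁+β₂))) * b k ≤ b (k+1) := by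
    intro k; rw [eb k]; exact (SA k).2.2.1
  have refined1 : ∀ k, β₁ * a k ≤ 1 →
      (1-α₁)*β₁ * ((psi (β₂*b k) - β₁*a k) * (1 - β₁*a k)^3) * a k ≤ a (k+1) := by
    intro k hk; rw [ea k]; exact (SA k).2.2.2.1 hk
  have refined2 : ∀ k, β₂ * b k ≤ 1 →
      (1-α₂)*β₂ * ((psi (β₁*a k) - β₂*b k) * (1 - β₂*b k)^3) * b k ≤ b (k+1) := by
    intro k hk; rw [eb k]; exact (SA k).2.2.2.2.1 hk
  have f2facts : ∀ k, f2 β₁ β₂ (F^[k] p) ∈ Set.Icc (0:ℝ) 1 ∧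
      |f2 β₁ β₂ (F^[k] p) - (1 - Real.exp (-(β₂* b k)))| ≤ β₁*β₂* a k :=
    fun k => (SA k).2.2.2.2.2
  have hb01 : ∀ k, b k ∈ Icc (0:ℝ) 1 := by
    intro k
    exact ⟨(hG k).2.1.le, by linarith [(hG k).1, (hG k).2.2]⟩
  have exp4pos : (0:ℝ) < Real.exp (-(4*(β₁+β₂))) := Real.exp_pos _
  -- upper bounds for liminf machinery
  have habove : ∀ k, a k ≤ 1 := fun k => by linarith [(hG k).2.1, (hG k).2.2]
  have hbabove : ∀ k, b k ≤ 1 := fun k => (hb01 k).2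
  have cobdd_a : Filter.IsCoboundedUnder (· ≥ ·) Filter.atTop a :=
    Filter.IsBoundedUnder.isCoboundedUnder_ge
      ⟨1, Filter.eventually_map.2 (Filter.Eventually.of_forall habove)⟩
  have cobdd_b : Filter.IsCoboundedUnder (· ≥ ·) Filter.atTop b :=
    Filter.IsBoundedUnder.isCoboundedUnder_ge
      ⟨1, Filter.eventually_map.2 (Filter.Eventually.of_forall hbabove)⟩
  constructor
  case right =>
    -- ===== TYPE 2 SURVIVAL =====
    set ψs := psi ((1-α₁)*β₁/2) with hψs
    have hψs_pos : 0 < ψs := psi_pos (by positivity)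
    have hψs_le1 : ψs ≤ 1 := psi_le_one (by positivity)
    have hinv : 1 < (1-α₂)*β₂ * ψs := by
      have h1 : psi ((1-α₂)*β₂/2) ≤ ψs := by
        rw [hψs]
        exact psi_anti (by positivity) (by linarith)
      have h2 : (1-α₂)*β₂ * psi ((1-α₂)*β₂/2) = 2*(1 - Real.exp (-((1-α₂)*β₂/2))) := by
        rw [psi, if_neg (ne_of_gt (by linarith : (0:ℝ) < (1-α₂)*β₂/2))]
        field_simp
      have h3 : Real.exp (-((1-α₂)*β₂/2)) < 1/2 := by
        have hh : -((1-α₂)*β₂/2) < -(Real.log 2) := by linarith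
        calc Real.exp (-((1-α₂)*β₂/2)) < Real.exp (-(Real.log 2)) := Real.exp_lt_exp.2 hh
          _ = 1/2 := by
              rw [Real.exp_neg, Real.exp_log (by norm_num : (0:ℝ) < 2)]
              norm_num
      nlinarith [mul_le_mul_of_nonneg_left h1 hφ₂0.le]
    set ε₀ := (1-α₂)*β₂*ψs - 1 with hε₀
    have hε₀pos : 0 < ε₀ := by rw [hε₀]; linarith
    set δ₂ := min (ε₀/(4*((1-α₂)*β₂)*β₂)) (min (1/(3*β₂)) (ψs/β₂)) with hδ₂
    have hδ₂pos : 0 < δ₂ := by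
      rw [hδ₂]
      apply lt_min (by positivity) (lt_min (by positivity) (by positivity))
    have hgrow2 : ∀ k, b (k+1) ≤ δ₂ → b (k+1) ≤ b (k+2) := by
      intro k hbk
      set x := β₂ * b (k+1) with hx
      have hbpos := (hG (k+1)).2.1
      have hx0 : 0 ≤ x := by positivity
      have hx3 : x ≤ 1/3 := by
        have h : min (ε₀/(4*((1-α₂)*β₂)*β₂)) (min (1/(3*β₂)) (ψs/β₂)) ≤ 1/(3*β₂) := min_le_of_right_le (min_le_left (1/(3*β₂)) (ψs/β₂))
        have : b (k+1) ≤ 1/(3*β₂) := le_trans hbk (by rw [hδ₂]; exact h)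
        rw [hx]
        calc β₂ * b (k+1) ≤ β₂ * (1/(3*β₂)) := by
              apply mul_le_mul_of_nonneg_left this hβ₂.le
          _ = 1/3 := by field_simp
      have hxe : x ≤ ε₀/(4*((1-α₂)*β₂)) := by
        have : b (k+1) ≤ ε₀/(4*((1-α₂)*β₂)*β₂) := le_trans hbk (by rw [hδ₂]; exact min_le_left _ _)
        rw [hx]
        calc β₂ * b (k+1) ≤ β₂ * (ε₀/(4*((1-α₂)*β₂)*β₂)) := by
              apply mul_le_mul_of_nonneg_left this hβ₂.le
          _ = ε₀/(4*((1-α₂)*β₂)) := by field_simp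
      have hxψ : x ≤ ψs := by
        have : b (k+1) ≤ ψs/β₂ :=
          le_trans hbk (by rw [hδ₂]; exact min_le_of_right_le (min_le_right _ _))
        rw [hx]
        calc β₂ * b (k+1) ≤ β₂ * (ψs/β₂) := by
              apply mul_le_mul_of_nonneg_left this hβ₂.le
          _ = ψs := by field_simp
      have hψa : ψs ≤ psi (β₁ * a (k+1)) := by
        rw [hψs]
        apply psi_anti (mul_nonneg hβ₁.le (hG (k+1)).1.le)
        have := (hG2 k).1
        nlinarith
      have s1 : ψs - 4*x ≤ (ψs - x)*(1-x)^3 := by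
        have e1 : (ψs - x)*(1-x)^3 - (ψs - 4*x)
            = 3*x*(1-ψs) + ψs*x^2*(3-x) + x^2*(3 - 3*x + x^2) := by ring
        have t1 : 0 ≤ 3*x*(1-ψs) := by
          apply mul_nonneg (by linarith) (by linarith)
        have t2 : 0 ≤ ψs*x^2*(3-x) := by
          apply mul_nonneg (mul_nonneg hψs_pos.le (sq_nonneg x)) (by linarith)
        have t3 : 0 ≤ x^2*(3 - 3*x + x^2) := by
          apply mul_nonneg (sq_nonneg x) (by nlinarith)
        linarith [e1 ▸ (by linarith : (0:ℝ) ≤ 3*x*(1-ψs) + ψs*x^2*(3-x) + x^2*(3 - 3*x + x^2))]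
      have s2 : 1 ≤ (1-α₂)*β₂ * (ψs - 4*x) := by
        have h := mul_le_mul_of_nonneg_left hxe hφ₂0.le
        have heq : (1-α₂)*β₂ * (ε₀/(4*((1-α₂)*β₂))) = ε₀/4 := by field_simp
        rw [heq] at h
        nlinarith
      have s3 : (ψs - x)*(1-x)^3 ≤ (psi (β₁ * a (k+1)) - x)*(1-x)^3 := by
        apply mul_le_mul_of_nonneg_right (by linarith) (pow_nonneg (by linarith) 3)
      have hscal : 1 ≤ (1-α₂)*β₂ * ((psi (β₁ * a (k+1)) - β₂*b (k+1)) * (1 - β₂*b (k+1))^3) := by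
        have c1 : (1-α₂)*β₂ * (ψs - 4*x) ≤ (1-α₂)*β₂ * ((ψs - x)*(1-x)^3) :=
          mul_le_mul_of_nonneg_left s1 hφ₂0.le
        have c2 : (1-α₂)*β₂ * ((ψs - x)*(1-x)^3) ≤
            (1-α₂)*β₂ * ((psi (β₁ * a (k+1)) - x)*(1-x)^3) :=
          mul_le_mul_of_nonneg_left s3 hφ₂0.le
        rw [← hx]
        linarith
      have href := refined2 (k+1) (by rw [← hx]; linarith)
      have hfin := mul_le_mul_of_nonneg_right hscal hbpos.le
      rw [one_mul] at hfin
      calc b (k+1) ≤ (1-α₂)*β₂ * ((psi (β₁*a (k+1)) - β₂*b (k+1)) * (1 - β₂*b (k+1))^3) * b (k+1) := hfin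
        _ ≤ b (k+2) := href
    set r₂ := (1-α₂)*β₂ * Real.exp (-(4*(β₁+β₂))) with hr₂
    have hr₂pos : 0 < r₂ := by rw [hr₂]; positivity
    have hmin2 : ∀ k, min (b (k+1)) (r₂*δ₂) ≤ b (k+2) := by
      intro k
      rcases le_or_gt (b (k+1)) δ₂ with hle | hgt
      · exact le_trans (min_le_left _ _) (hgrow2 k hle)
      · have h : r₂ * b (k+1) ≤ b (k+2) := by rw [hr₂]; exact crude2 (k+1)
        have h2 : r₂ * δ₂ ≤ r₂ * b (k+1) := mul_le_mul_of_nonneg_left hgt.le hr₂pos.le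
        exact le_trans (min_le_right _ _) (le_trans h2 h)
    have hblow : ∀ k, min (b 1) (r₂*δ₂) ≤ b (k+1) := by
      intro k
      induction k with
      | zero => exact min_le_left _ _
      | succ n ih =>
        have := hmin2 n
        have h2 : min (b 1) (r₂*δ₂) ≤ min (b (n+1)) (r₂*δ₂) :=
          le_min ih (min_le_right _ _)
        linarith
    have hc₂pos : 0 < min (b 1) (r₂*δ₂) := lt_min (hG 1).2.1 (mul_pos hr₂pos hδ₂pos)
    have : min (b 1) (r₂*δ₂) ≤ Filter.liminf b Filter.atTop := by
      apply Filter.le_liminf_of_le cobdd_b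
      rw [Filter.eventually_atTop]
      refine ⟨1, fun k hk => ?_⟩
      obtain ⟨m, rfl⟩ := Nat.exists_eq_add_of_le hk
      have := hblow m
      rwa [Nat.add_comm 1 m]
    linarith
  case left =>
    -- ===== TYPE 1 SURVIVAL =====
    have hφθ : 1/((1-α₁)*β₁) < sigma α₂ β₂ := by
      rw [div_lt_iff₀ hφ₁0]; nlinarith
    set θ := (1/((1-α₁)*β₁) + sigma α₂ β₂)/2 with hθdef
    have hθgt : 1/((1-α₁)*β₁) < θ := by rw [hθdef]; linarith
    have hθpos : 0 < θ := lt_trans (by positivity) hθgt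
    have hθlow : 1 < (1-α₁)*β₁ * θ := by
      have := (div_lt_iff₀ hφ₁0).1 hθgt
      nlinarith
    have hθσ : θ < sigma α₂ β₂ := by rw [hθdef]; linarith
    have hK1 : Icc (0:ℝ) (pbar α₂) ⊆ Icc (0:ℝ) 1 :=
      Icc_subset_Icc le_rfl (by linarith [pbar_le_half hα₂0 hα₂1])
    have hLx : ∀ x ∈ Icc (0:ℝ) (pbar α₂), θ < Filter.liminf
        (fun n : ℕ => (∏ k ∈ Finset.range n, psi (β₂ * (tmap α₂ β₂)^[k] x)) ^ (1 / (n : ℝ)))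
        Filter.atTop := by
      intro x hx
      have hbdd : BddBelow ((fun x => Filter.liminf
          (fun n : ℕ => (∏ k ∈ Finset.range n, psi (β₂ * (tmap α₂ β₂)^[k] x)) ^ (1 / (n : ℝ)))
          Filter.atTop) '' Icc (0:ℝ) (pbar α₂)) := by
        refine ⟨0, ?_⟩
        rintro z ⟨y, hy, rfl⟩
        have hy1 := hK1 hy
        apply Filter.le_liminf_of_le
        · apply Filter.IsBoundedUnder.isCoboundedUnder_ge
          refine ⟨1, Filter.eventually_map.2 (Filter.Eventually.of_forall fun n => ?_)⟩
          apply Real.rpow_le_one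
          · exact Finset.prod_nonneg fun k _ =>
              (psi_pos (mul_nonneg hβ₂.le (tmap_iter_mem hα₂0 hα₂1 hβ₂ hy1 k).1)).le
          · apply Finset.prod_le_one
            · intro k _
              exact (psi_pos (mul_nonneg hβ₂.le (tmap_iter_mem hα₂0 hα₂1 hβ₂ hy1 k).1)).le
            · intro k _
              exact psi_le_one (mul_nonneg hβ₂.le (tmap_iter_mem hα₂0 hα₂1 hβ₂ hy1 k).1)
          · positivity
        · apply Filter.Eventually.of_forall
          intro n
          exact Real.rpow_nonneg (Finset.prod_nonneg fun k _ =>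
            (psi_pos (mul_nonneg hβ₂.le (tmap_iter_mem hα₂0 hα₂1 hβ₂ hy1 k).1)).le) _
      have hle : sigma α₂ β₂ ≤ Filter.liminf
          (fun n : ℕ => (∏ k ∈ Finset.range n, psi (β₂ * (tmap α₂ β₂)^[k] x)) ^ (1 / (n : ℝ)))
          Filter.atTop := csInf_le hbdd ⟨x, hx, rfl⟩
      linarith
    obtain ⟨N, hN1, hUb⟩ := exists_N hα₂ hβ₂ hθpos hLx
    set μ := Real.exp (-β₂) with hμ
    have hμpos : 0 < μ := Real.exp_pos _
    have hψμ : ∀ z, 0 ≤ z → z ≤ 1 → μ ≤ psi (β₂*z) := by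
      intro z h0 h1t
      have h2 := exp_le_psi (x := β₂*z) (by positivity)
      have h3 : μ ≤ Real.exp (-(β₂*z)) := by
        rw [hμ]
        apply Real.exp_le_exp.2
        nlinarith
      linarith
    set c := (1-α₁)*β₁*θ with hc
    have hc1 : 1 < c := hθlow
    have hc0 : 0 < c := by linarith
    set η := (c - 1)/(4*c) with hη
    have hη0 : 0 < η := by rw [hη]; exact div_pos (by linarith) (by linarith)
    have hη1 : η < 1 := by
      rw [hη, div_lt_one (by positivity)]; nlinarith
    have hηc : η * c = (c-1)/4 := by rw [hη]; field_simp
    have hkey : 1 ≤ (1-η)*((1-η)*c) := by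
      nlinarith [mul_nonneg (mul_nonneg hη0.le hη0.le) hc0.le, hηc]
    have ug := unif_of_contOn (continuousOn_g hα₂0 hα₂1)
    have ut := unif_of_contOn (continuousOn_tmap hα₂0 hα₂1 hβ₂)
    -- shadowing lemma
    have shadow : ∀ n : ℕ, ∀ ε : ℝ, 0 < ε → ∃ δ : ℝ, 0 < δ ∧ ∀ m ≤ n, ∀ k : ℕ,
        (∀ j < m, a (k+j) ≤ δ) → |b (k+m) - (tmap α₂ β₂)^[m] (b k)| ≤ ε := by
      intro n
      induction n with
      | zero =>
        intro ε hε
        refine ⟨1, one_pos, ?_⟩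
        intro m hm k _
        have hm0 : m = 0 := Nat.le_zero.1 hm
        subst hm0
        simp only [Nat.add_zero, Function.iterate_zero, id_eq, sub_self, abs_zero]
        linarith
      | succ n ih =>
        intro ε hε
        obtain ⟨δt, hδt0, hδtp⟩ := ut (ε/2) (by linarith)
        obtain ⟨δg, hδg0, hδgp⟩ := ug (ε/2) (by linarith)
        obtain ⟨δa, hδa0, hδap⟩ := ih ε hε
        obtain ⟨δb, hδb0, hδbp⟩ := ih δt hδt0
        refine ⟨min (min δa δb) (δg/(β₁*β₂)), by positivity, ?_⟩
        intro m hm k hwin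
        rcases Nat.lt_or_ge m (n+1) with hmn | hmn
        · exact hδap m (by omega) k (fun j hj => le_trans (hwin j hj)
            (le_trans (min_le_left _ _) (min_le_left _ _)))
        · have hm' : m = n+1 := by omega
          subst hm'
          have h1 : |b (k+n) - (tmap α₂ β₂)^[n] (b k)| ≤ δt :=
            hδbp n le_rfl k (fun j hj => le_trans (hwin j (by omega))
              (le_trans (min_le_left _ _) (min_le_right _ _)))
          have hbt : (tmap α₂ β₂)^[n] (b k) ∈ Icc (0:ℝ) 1 :=
            tmap_iter_mem hα₂0 hα₂1 hβ₂ (hb01 k) n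
          have e2 : |tmap α₂ β₂ (b (k+n)) - tmap α₂ β₂ ((tmap α₂ β₂)^[n] (b k))| ≤ ε/2 :=
            hδtp _ (hb01 (k+n)) _ hbt h1
          have e1 : |b (k+n+1) - tmap α₂ β₂ (b (k+n))| ≤ ε/2 := by
            have hbq : b (k+n+1) = g α₂ (f2 β₁ β₂ (F^[k+n] p)) := eb (k+n)
            have htq : tmap α₂ β₂ (b (k+n)) = g α₂ (1 - Real.exp (-(β₂ * b (k+n)))) := rfl
            rw [hbq, htq]
            apply hδgp _ (f2facts (k+n)).1 _ (one_sub_exp_mem hβ₂ (hG (k+n)).2.1.le)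
            have h3 := (f2facts (k+n)).2
            have h4 : a (k+n) ≤ δg/(β₁*β₂) := le_trans (hwin n (by omega)) (min_le_right _ _)
            calc |f2 β₁ β₂ (F^[k+n] p) - (1 - Real.exp (-(β₂* b (k+n))))|
                ≤ β₁*β₂* a (k+n) := h3
              _ ≤ β₁*β₂*(δg/(β₁*β₂)) := by
                  apply mul_le_mul_of_nonneg_left h4 (by positivity)
              _ = δg := by field_simp
          have hsucc := Function.iterate_succ_apply' (tmap α₂ β₂) n (b k)
          calc |b (k+(n+1)) - (tmap α₂ β₂)^[n+1] (b k)|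
              ≤ |b (k+n+1) - tmap α₂ β₂ (b (k+n))|
                + |tmap α₂ β₂ (b (k+n)) - (tmap α₂ β₂)^[n+1] (b k)| := by
                  rw [show k+(n+1) = k+n+1 from rfl]
                  exact abs_sub_le _ _ _
            _ ≤ ε/2 + ε/2 := by
                refine add_le_add e1 ?_
                rw [hsucc]
                exact e2
            _ = ε := by ring
    set εs := η*μ/β₂ with hεs
    have hεs0 : 0 < εs := by rw [hεs]; positivity
    obtain ⟨δsh, hδsh0, hshp⟩ := shadow N εs hεs0
    set δs := min δsh (min (η*μ/(4*β₁)) (min (1/(3*β₁)) (μ/β₁))) with hδs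
    have hδs0 : 0 < δs := by
      rw [hδs]
      exact lt_min hδsh0 (lt_min (by positivity) (lt_min (by positivity) (by positivity)))
    -- per-step growth inside a block
    have instep : ∀ k, a k ≤ δs →
        (1-η)*((1-α₁)*β₁) * psi (β₂ * b k) * a k ≤ a (k+1) := by
      intro k hk
      set y := β₁ * a k with hy
      have hy0 : 0 ≤ y := mul_nonneg hβ₁.le (hG k).1.le
      have hy3 : y ≤ 1/3 := by
        have h5 : a k ≤ 1/(3*β₁) := le_trans hk (by
          rw [hδs]
          exact le_trans (min_le_right _ _) (le_trans (min_le_right _ _) (min_le_left _ _)))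
        calc y = β₁ * a k := hy
          _ ≤ β₁ * (1/(3*β₁)) := mul_le_mul_of_nonneg_left h5 hβ₁.le
          _ = 1/3 := by field_simp
      have hyμ : y ≤ μ := by
        have h5 : a k ≤ μ/β₁ := le_trans hk (by
          rw [hδs]
          exact le_trans (min_le_right _ _) (le_trans (min_le_right _ _) (min_le_right _ _)))
        calc y = β₁ * a k := hy
          _ ≤ β₁ * (μ/β₁) := mul_le_mul_of_nonneg_left h5 hβ₁.le
          _ = μ := by field_simp
      have hyη : 4*y ≤ η*μ := by
        have h5 : a k ≤ η*μ/(4*β₁) := le_trans hk (by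
          rw [hδs]
          exact le_trans (min_le_right _ _) (min_le_left _ _))
        calc 4*y = (4*β₁) * a k := by rw [hy]; try ring
          _ ≤ (4*β₁)*(η*μ/(4*β₁)) := mul_le_mul_of_nonneg_left h5 (by positivity)
          _ = η*μ := by field_simp; try ring
      have hψb : μ ≤ psi (β₂ * b k) := hψμ (b k) (hG k).2.1.le (hbabove k)
      have hψb1 : psi (β₂ * b k) ≤ 1 :=
        psi_le_one (mul_nonneg hβ₂.le (hG k).2.1.le)
      have hyψ : y ≤ psi (β₂*b k) := le_trans hyμ hψb
      have s1 : psi (β₂*b k) - 4*y ≤ (psi (β₂*b k) - y)*(1-y)^3 := by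
        have e1 : (psi (β₂*b k) - y)*(1-y)^3 - (psi (β₂*b k) - 4*y)
            = 3*y*(1-psi (β₂*b k)) + psi (β₂*b k)*y^2*(3-y) + y^2*(3 - 3*y + y^2) := by ring
        have t1 : 0 ≤ 3*y*(1-psi (β₂*b k)) := mul_nonneg (by linarith) (by linarith)
        have t2 : 0 ≤ psi (β₂*b k)*y^2*(3-y) :=
          mul_nonneg (mul_nonneg (by linarith) (sq_nonneg y)) (by linarith)
        have t3 : 0 ≤ y^2*(3 - 3*y + y^2) := mul_nonneg (sq_nonneg y) (by nlinarith)
        nlinarith [e1]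
      have s2 : (1-η)*psi (β₂*b k) ≤ psi (β₂*b k) - 4*y := by
        have h6 : η*μ ≤ η*psi (β₂*b k) := mul_le_mul_of_nonneg_left hψb hη0.le
        nlinarith
      have href := refined1 k (by rw [← hy] at *; linarith)
      have hmono : (1-η)*psi (β₂*b k) ≤ (psi (β₂*b k) - β₁*a k)*(1 - β₁*a k)^3 := by
        rw [← hy]; linarith
      have hfin := mul_le_mul_of_nonneg_right
        (mul_le_mul_of_nonneg_left hmono hφ₁0.le) (hG k).1.le
      nlinarith [hfin, href]
    -- comparison of psi along the orbit with psi along the true tmap orbit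
    have compare : ∀ k, ∀ j ≤ N, (∀ i < j, a (k+i) ≤ δs) →
        (1-η) * psi (β₂ * (tmap α₂ β₂)^[j] (b k)) ≤ psi (β₂ * b (k+j)) := by
      intro k j hj hwin
      have hsd := hshp j hj k (fun i hi => le_trans (hwin i hi)
        (by rw [hδs]; exact min_le_left _ _))
      have htm : (tmap α₂ β₂)^[j] (b k) ∈ Icc (0:ℝ) 1 :=
        tmap_iter_mem hα₂0 hα₂1 hβ₂ (hb01 k) j
      have h1 : b (k+j) ≤ (tmap α₂ β₂)^[j] (b k) + εs := by
        have h' := abs_le.1 hsd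
        linarith [h'.2]
      have h2 : psi (β₂ * ((tmap α₂ β₂)^[j] (b k) + εs)) ≤ psi (β₂ * b (k+j)) :=
        psi_anti (mul_nonneg hβ₂.le (hG (k+j)).2.1.le) (mul_le_mul_of_nonneg_left h1 hβ₂.le)
      have h3 : psi (β₂ * (tmap α₂ β₂)^[j] (b k)) - β₂*εs
          ≤ psi (β₂ * ((tmap α₂ β₂)^[j] (b k) + εs)) := by
        have h' := psi_lower (a := β₂ * (tmap α₂ β₂)^[j] (b k)) (b := β₂*εs)
          (mul_nonneg hβ₂.le htm.1) (by positivity)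
        have heq : β₂ * ((tmap α₂ β₂)^[j] (b k) + εs)
            = β₂ * (tmap α₂ β₂)^[j] (b k) + β₂*εs := by ring
        rw [heq]
        exact h'
      have h4 : β₂ * εs = η*μ := by rw [hεs]; field_simp
      have h5 : μ ≤ psi (β₂ * (tmap α₂ β₂)^[j] (b k)) := hψμ _ htm.1 htm.2
      have h6 : η*μ ≤ η* psi (β₂ * (tmap α₂ β₂)^[j] (b k)) :=
        mul_le_mul_of_nonneg_left h5 hη0.le
      nlinarith
    -- block growth
    have block : ∀ k, 1 ≤ k → ∀ n, n ≤ N → (∀ j, j < n → a (k+j) ≤ δs) →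
        a k * ∏ j ∈ Finset.range n,
          ((1-η)*((1-η)*((1-α₁)*β₁)) * psi (β₂ * (tmap α₂ β₂)^[j] (b k))) ≤ a (k+n) := by
      intro k hk1 n
      induction n with
      | zero => intro _ _; simp
      | succ n ihn =>
        intro hn1 hwin
        have h1 := ihn (by omega) (fun j hj => hwin j (by omega))
        have h2 := instep (k+n) (hwin n (by omega))
        have h3 := compare k n (by omega) (fun i hi => hwin i (by omega))
        have hψt0 : 0 ≤ psi (β₂ * (tmap α₂ β₂)^[n] (b k)) :=
          (psi_pos (mul_nonneg hβ₂.le (tmap_iter_mem hα₂0 hα₂1 hβ₂ (hb01 k) n).1)).le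
        have hfn0 : 0 ≤ (1-η)*((1-η)*((1-α₁)*β₁)) * psi (β₂ * (tmap α₂ β₂)^[n] (b k)) :=
          mul_nonneg (mul_nonneg (by linarith) (mul_nonneg (by linarith) hφ₁0.le)) hψt0
        rw [Finset.prod_range_succ]
        have hstep : (1-η)*((1-η)*((1-α₁)*β₁)) * psi (β₂ * (tmap α₂ β₂)^[n] (b k)) * a (k+n)
            ≤ a (k+n+1) := by
          have c1 : (1-η)*((1-α₁)*β₁) * ((1-η) * psi (β₂ * (tmap α₂ β₂)^[n] (b k))) * a (k+n)
              ≤ (1-η)*((1-α₁)*β₁) * psi (β₂ * b (k+n)) * a (k+n) := by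
            apply mul_le_mul_of_nonneg_right
              (mul_le_mul_of_nonneg_left h3 (mul_nonneg (by linarith) hφ₁0.le)) (hG (k+n)).1.le
          calc (1-η)*((1-η)*((1-α₁)*β₁)) * psi (β₂ * (tmap α₂ β₂)^[n] (b k)) * a (k+n)
              = (1-η)*((1-α₁)*β₁) * ((1-η) * psi (β₂ * (tmap α₂ β₂)^[n] (b k))) * a (k+n) := by
                ring
            _ ≤ (1-η)*((1-α₁)*β₁) * psi (β₂ * b (k+n)) * a (k+n) := c1
            _ ≤ a (k+n+1) := h2
        have hPn0 : 0 ≤ ∏ j ∈ Finset.range n,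
            ((1-η)*((1-η)*((1-α₁)*β₁)) * psi (β₂ * (tmap α₂ β₂)^[j] (b k))) := by
          apply Finset.prod_nonneg
          intro j _
          exact mul_nonneg (mul_nonneg (by linarith) (mul_nonneg (by linarith) hφ₁0.le))
            (psi_pos (mul_nonneg hβ₂.le (tmap_iter_mem hα₂0 hα₂1 hβ₂ (hb01 k) j).1)).le
        calc a k * ((∏ j ∈ Finset.range n,
              ((1-η)*((1-η)*((1-α₁)*β₁)) * psi (β₂ * (tmap α₂ β₂)^[j] (b k))))
              * ((1-η)*((1-η)*((1-α₁)*β₁)) * psi (β₂ * (tmap α₂ β₂)^[n] (b k))))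
            = (a k * ∏ j ∈ Finset.range n,
              ((1-η)*((1-η)*((1-α₁)*β₁)) * psi (β₂ * (tmap α₂ β₂)^[j] (b k))))
              * ((1-η)*((1-η)*((1-α₁)*β₁)) * psi (β₂ * (tmap α₂ β₂)^[n] (b k))) := by ring
          _ ≤ a (k+n) * ((1-η)*((1-η)*((1-α₁)*β₁)) * psi (β₂ * (tmap α₂ β₂)^[n] (b k))) :=
              mul_le_mul_of_nonneg_right h1 hfn0
          _ = (1-η)*((1-η)*((1-α₁)*β₁)) * psi (β₂ * (tmap α₂ β₂)^[n] (b k)) * a (k+n) := by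
              ring
          _ ≤ a (k+(n+1)) := hstep
    -- crude one-step ratio
    set r := min ((1-α₁)*β₁ * Real.exp (-(4*(β₁+β₂)))) 1 with hr
    have hr0 : 0 < r := lt_min (by positivity) one_pos
    have hr1 : r ≤ 1 := min_le_right _ _
    have hcr : ∀ k, r * a k ≤ a (k+1) := by
      intro k
      have h1 := crude1 k
      have h2 : r * a k ≤ (1-α₁)*β₁ * Real.exp (-(4*(β₁+β₂))) * a k :=
        mul_le_mul_of_nonneg_right (min_le_left _ _) (hG k).1.le
      linarith
    have hiterr : ∀ k j, r^j * a k ≤ a (k+j) := by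
      intro k j
      induction j with
      | zero => simp
      | succ n ih =>
        have h1 := hcr (k+n)
        have h3 : r * (r^n * a k) ≤ r * a (k+n) := mul_le_mul_of_nonneg_left ih hr0.le
        calc r^(n+1) * a k = r * (r^n * a k) := by ring
          _ ≤ r * a (k+n) := h3
          _ ≤ a (k+n+1) := h1
    set m₀ := min (a 1) (r*δs) with hm₀
    have hm₀0 : 0 < m₀ := lt_min (hG 1).1 (mul_pos hr0 hδs0)
    have hrn : ∀ j, j ≤ N → r^N ≤ r^j := fun j hj => pow_le_pow_of_le_one hr0.le hr1 hj
    have step1 : ∀ k, 1 ≤ k → m₀ ≤ a k →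
        ∃ n, 1 ≤ n ∧ n ≤ N ∧ m₀ ≤ a (k+n) ∧ ∀ j ≤ n, r^N * m₀ ≤ a (k+j) := by
      intro k hk1 hak
      have hinterm : ∀ j, j ≤ N → r^N * m₀ ≤ a (k+j) := by
        intro j hj
        calc r^N * m₀ ≤ r^j * a k :=
              mul_le_mul (hrn j hj) hak hm₀0.le (pow_nonneg hr0.le j)
          _ ≤ a (k+j) := hiterr k j
      rcases le_or_gt (a k) δs with hsm | hbig
      · have hbK : b k ∈ Icc (0:ℝ) (pbar α₂) := by
          obtain ⟨k', rfl⟩ := Nat.exists_eq_add_of_le hk1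
          refine ⟨(hG (1+k')).2.1.le, ?_⟩
          rw [Nat.add_comm 1 k']
          exact (hG2 k').2.2
        obtain ⟨n, hn1, hnN, hprod⟩ := hUb (b k) hbK
        by_cases hesc : ∀ j, j < n → a (k+j) ≤ δs
        · have hbl := block k hk1 n hnN hesc
          have hCn : (∏ j ∈ Finset.range n,
              ((1-η)*((1-η)*((1-α₁)*β₁)) * psi (β₂ * (tmap α₂ β₂)^[j] (b k))))
              = ((1-η)*((1-η)*((1-α₁)*β₁)))^n
                * ∏ j ∈ Finset.range n, psi (β₂ * (tmap α₂ β₂)^[j] (b k)) := by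
            rw [Finset.prod_mul_distrib, Finset.prod_const, Finset.card_range]
          have hC0 : (0:ℝ) ≤ (1-η)*((1-η)*((1-α₁)*β₁)) :=
            mul_nonneg (by linarith) (mul_nonneg (by linarith) hφ₁0.le)
          have h2 : ((1-η)*((1-η)*((1-α₁)*β₁)))^n * θ^n
              ≤ ((1-η)*((1-η)*((1-α₁)*β₁)))^n
                * ∏ j ∈ Finset.range n, psi (β₂ * (tmap α₂ β₂)^[j] (b k)) :=
            mul_le_mul_of_nonneg_left hprod.le (pow_nonneg hC0 n)
          have h3 : (1:ℝ) ≤ ((1-η)*((1-η)*((1-α₁)*β₁)))^n * θ^n := by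
            rw [← mul_pow]
            apply one_le_pow₀
            have heq : (1-η)*((1-η)*((1-α₁)*β₁))*θ = (1-η)*((1-η)*c) := by rw [hc]; ring
            rw [heq]
            exact hkey
          have h4 : a k ≤ a k * (((1-η)*((1-η)*((1-α₁)*β₁)))^n
              * ∏ j ∈ Finset.range n, psi (β₂ * (tmap α₂ β₂)^[j] (b k))) :=
            le_mul_of_one_le_right (hG k).1.le (le_trans h3 h2)
          refine ⟨n, hn1, hnN, ?_, fun j hj => hinterm j (le_trans hj hnN)⟩
          rw [hCn] at hbl
          calc m₀ ≤ a k := hak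
            _ ≤ a k * (((1-η)*((1-η)*((1-α₁)*β₁)))^n
                * ∏ j ∈ Finset.range n, psi (β₂ * (tmap α₂ β₂)^[j] (b k))) := h4
            _ ≤ a (k+n) := hbl
        · push_neg at hesc
          obtain ⟨j, hjn, hja⟩ := hesc
          have hj1 : 1 ≤ j := by
            rcases Nat.eq_zero_or_pos j with rfl | h
            · exact absurd (by simpa using hja : δs < a k) (not_lt.2 hsm)
            · exact h
          refine ⟨j, hj1, by omega, ?_, fun i hi => hinterm i (by omega)⟩
          have hrd : r*δs ≤ δs := by nlinarith
          calc m₀ ≤ r*δs := min_le_right _ _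
            _ ≤ δs := hrd
            _ ≤ a (k+j) := hja.le
      · refine ⟨1, le_rfl, hN1, ?_, fun j hj => hinterm j (by omega)⟩
        have h1 := hcr k
        calc m₀ ≤ r * δs := min_le_right _ _
          _ ≤ r * a k := mul_le_mul_of_nonneg_left hbig.le hr0.le
          _ ≤ a (k+1) := h1
    have main : ∀ d k, 1 ≤ k → m₀ ≤ a k → r^N * m₀ ≤ a (k+d) := by
      intro d
      induction d using Nat.strong_induction_on with
      | _ d ihd =>
        intro k hk1 hak
        obtain ⟨n, hn1, hnN, hnext, hcov⟩ := step1 k hk1 hak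
        rcases le_or_gt d n with hdn | hdn
        · exact hcov d hdn
        · have harith : k + d = (k+n) + (d - n) := by omega
          rw [harith]
          exact ihd (d-n) (by omega) (k+n) (by omega) hnext
    have hcpos : 0 < r^N * m₀ := mul_pos (pow_pos hr0 N) hm₀0
    have hlim : r^N * m₀ ≤ Filter.liminf a Filter.atTop := by
      apply Filter.le_liminf_of_le cobdd_a
      rw [Filter.eventually_atTop]
      refine ⟨1, fun k hk => ?_⟩
      obtain ⟨m, rfl⟩ := Nat.exists_eq_add_of_le hk
      exact main m 1 le_rfl (min_le_left _ _)
    linarith
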